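/- For all integers n and k with (n,k) ≠ (0,0), the generalized q-binomial coefficient satisfies the second q-Pascal rule qbinom(n,k) = q^{n-k} · qbinom(n-1,k-1) + qbinom(n-1,k). -/
import Mathlib

open LaurentPolynomial in
/-- The ordinary Gaussian binomial coefficient as a (Laurent) polynomial in `q = T 1`,
defined by the `q`-Pascal rule; it is `0` when the lower entry exceeds the upper one. -/
noncomputable def gauss : ℕ → ℕ → LaurentPolynomial ℤ
  | _, 0 => 1
  | 0, _ + 1 => 0
  | a + 1, b + 1 => gauss a b + T ((b : ℤ) + 1) * gauss a (b + 1)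

open LaurentPolynomial in
/-- The generalized `q`-binomial coefficient, a Laurent polynomial in `q = T 1`,
extended to arbitrary integer entries. -/
noncomputable def qbinom (n k : ℤ) : LaurentPolynomial ℤ :=
  if 0 ≤ k ∧ k ≤ n then gauss n.toNat k.toNat
  else if n < 0 ∧ 0 ≤ k then
    (-1) ^ k.toNat * T (k * (2 * n - k + 1) / 2) * gauss (k - n - 1).toNat k.toNat
  else if k ≤ n ∧ n < 0 then
    (-1) ^ (n - k).toNat * T ((n * (n + 1) - k * (k + 1)) / 2) *
      gauss (-k - 1).toNat (-n - 1).toNat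
  else 0

namespace QbinomAux
open LaurentPolynomial

lemma gauss_zero (a : ℕ) : gauss a 0 = 1 := by cases a <;> rfl

lemma gauss_succ (a b : ℕ) :
    gauss (a+1) (b+1) = gauss a b + T ((b : ℤ) + 1) * gauss a (b + 1) := rfl

lemma gauss_eq_zero : ∀ a b : ℕ, a < b → gauss a b = 0
  | 0, _+1, _ => rfl
  | a+1, b+1, h => by
    rw [gauss_succ, gauss_eq_zero a b (by omega), gauss_eq_zero a (b+1) (by omega)]
    ring

lemma gauss_self : ∀ a : ℕ, gauss a a = 1
  | 0 => rfl
  | a+1 => by rw [gauss_succ, gauss_self a, gauss_eq_zero a (a+1) (by omega)]; ring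

lemma gauss_pascal2 : ∀ a b : ℕ, gauss (a+1) (b+1) = T ((a:ℤ) - b) * gauss a b + gauss a (b+1)
  | 0, 0 => by simp [gauss_succ, gauss_zero, gauss_eq_zero 0 1 (by omega)]
  | 0, b+1 => by
    simp [gauss_succ, gauss_eq_zero 0 (b+1) (by omega), gauss_eq_zero 0 (b+2) (by omega)]
  | a+1, 0 => by
    have h0 := gauss_succ (a+1) 0
    have h1 := gauss_pascal2 a 0
    have h2 := gauss_succ a 0
    have h3 : (T 1 : LaurentPolynomial ℤ) * T ((a:ℤ) - 0) = T ((a:ℤ)+1-0) := by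
      rw [← T_add]; congr 1; ring
    rw [gauss_zero] at *
    push_cast at h0 h1 h2 h3 ⊢
    linear_combination h0 + (T 1 : LaurentPolynomial ℤ) * h1 - h2 + h3
  | a+1, b+1 => by
    have h1 := gauss_pascal2 a b
    have h1' := gauss_pascal2 a (b+1)
    have h2 := gauss_succ a b
    have h2' := gauss_succ a (b+1)
    have hT1 : (T ((b:ℤ)+2) : LaurentPolynomial ℤ) * T ((a:ℤ)-(b+1)) = T ((a:ℤ)+1-(b+1)+(b+1)) := by
      rw [← T_add]; congr 1; ring
    have hT2 : (T ((a:ℤ)-b) : LaurentPolynomial ℤ) * T ((b:ℤ)+1) = T ((a:ℤ)+1-(b+1)+(b+1)) := by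
      rw [← T_add]; congr 1; ring
    have h0 := gauss_succ (a+1) (b+1)
    push_cast at h0 h1 h1' h2 h2' hT1 hT2 ⊢
    rw [show ((a:ℤ)+1-((b:ℤ)+1)) = (a:ℤ)-(b:ℤ) by ring] at *
    rw [show ((b:ℤ)+1+1) = (b:ℤ)+2 by ring] at *
    linear_combination h0 + h1 + T ((b:ℤ)+2) * h1' - T ((a:ℤ)-b) * h2 - h2' +
      gauss a (b+1) * (hT1 - hT2)

lemma qbinom_pos {n k : ℤ} (h1 : 0 ≤ k) (h2 : k ≤ n) :
    qbinom n k = gauss n.toNat k.toNat := by rw [qbinom, if_pos ⟨h1, h2⟩]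

lemma qbinom_neg₂ {n k : ℤ} (h1 : n < 0) (h2 : 0 ≤ k) :
    qbinom n k = (-1) ^ k.toNat * T (k * (2 * n - k + 1) / 2) * gauss (k - n - 1).toNat k.toNat := by
  rw [qbinom, if_neg (by omega), if_pos ⟨h1, h2⟩]

lemma qbinom_neg₃ {n k : ℤ} (h1 : k ≤ n) (h2 : n < 0) :
    qbinom n k = (-1) ^ (n - k).toNat * T ((n * (n + 1) - k * (k + 1)) / 2) *
      gauss (-k - 1).toNat (-n - 1).toNat := by
  rw [qbinom, if_neg (by omega), if_neg (by omega), if_pos ⟨h1, h2⟩]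

lemma qbinom_zero {n k : ℤ} (h : (0 ≤ n ∧ n < k) ∨ (0 ≤ n ∧ k < 0) ∨ (n < k ∧ k < 0)) :
    qbinom n k = 0 := by
  rw [qbinom, if_neg (by omega), if_neg (by omega), if_neg (by omega)]

end QbinomAux

open LaurentPolynomial QbinomAux in
theorem qbinom_pascal' (n k : ℤ) (h : (n, k) ≠ (0, 0)) :
    qbinom n k = T (n - k) * qbinom (n - 1) (k - 1) + qbinom (n - 1) k := by
  have h' : ¬(n = 0 ∧ k = 0) := fun ⟨h1, h2⟩ => h (by rw [h1, h2])
  have h2ne : (2:ℤ) ≠ 0 := by norm_num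
  rcases lt_trichotomy n 0 with hn | hn | hn
  · -- n < 0
    rcases lt_trichotomy n k with hnk | hnk | hnk
    · rcases lt_trichotomy k 0 with hk | hk | hk
      · -- n < k < 0 : all zero
        rw [qbinom_zero (by omega), qbinom_zero (by omega), qbinom_zero (by omega)]; ring
      · -- k = 0, n < 0
        subst hk
        rw [qbinom_neg₂ hn le_rfl, qbinom_neg₂ (n := n-1) (k := 0) (by omega) le_rfl,
          qbinom_zero (by omega)]
        simp [Int.toNat_zero, gauss_zero, T_zero]
      · -- n < 0 < k
        obtain ⟨m, hm⟩ := Int.even_mul_succ_self (k-1)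
        have eA : k * (2 * n - k + 1) / 2 = (n - k) + (n*k - m - n) + k := by
          rw [show k * (2 * n - k + 1) = 2*((n - k) + (n*k - m - n) + k) by linear_combination -hm]
          exact Int.mul_ediv_cancel_left _ h2ne
        have eB : (k-1) * (2 * (n-1) - (k-1) + 1) / 2 = n*k - m - n := by
          rw [show (k-1) * (2 * (n-1) - (k-1) + 1) = 2*(n*k - m - n) by linear_combination -hm]
          exact Int.mul_ediv_cancel_left _ h2ne
        have eC : k * (2 * (n-1) - k + 1) / 2 = (n - k) + (n*k - m - n) := by
          rw [show k * (2 * (n-1) - k + 1) = 2*((n - k) + (n*k - m - n)) by linear_combination -hm]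
          exact Int.mul_ediv_cancel_left _ h2ne
        rw [qbinom_neg₂ hn (by omega), qbinom_neg₂ (n := n-1) (k := k-1) (by omega) (by omega),
            qbinom_neg₂ (n := n-1) (k := k) (by omega) (by omega), eA, eB, eC,
            show k - 1 - (n-1) - 1 = k - n - 1 by ring,
            show k - (n-1) - 1 = k - n by ring,
            show (k - n).toNat = (k - n - 1).toNat + 1 by omega,
            show k.toNat = (k-1).toNat + 1 by omega,
            gauss_succ, show ((k-1).toNat : ℤ) + 1 = k by omega]
        simp only [T_add]
        ring
    · -- k = n < 0
      obtain rfl : n = k := hnk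
      rw [qbinom_neg₃ le_rfl hn, qbinom_neg₃ (n := n-1) (k := n-1) le_rfl (by omega),
        qbinom_zero (by omega), sub_self, sub_self]
      simp [Int.zero_ediv, T_zero, Int.toNat_zero, gauss_self, sub_self]
    · -- k < n < 0
      obtain ⟨p, hp⟩ := Int.even_mul_succ_self n
      obtain ⟨q, hq⟩ := Int.even_mul_succ_self k
      have eD : (n * (n + 1) - k * (k + 1)) / 2 = (n - k) + (p - q - n + k) := by
        rw [show n * (n + 1) - k * (k + 1) = 2*((n - k) + (p - q - n + k)) by
          linear_combination hp - hq]
        exact Int.mul_ediv_cancel_left _ h2ne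
      have eE : ((n-1) * ((n-1) + 1) - (k-1) * ((k-1) + 1)) / 2 = p - q - n + k := by
        rw [show (n-1) * ((n-1) + 1) - (k-1) * ((k-1) + 1) = 2*(p - q - n + k) by
          linear_combination hp - hq]
        exact Int.mul_ediv_cancel_left _ h2ne
      have eF : ((n-1) * ((n-1) + 1) - k * (k + 1)) / 2 = (n - k) + (p - q - n + k) + -n := by
        rw [show (n-1) * ((n-1) + 1) - k * (k + 1) = 2*((n - k) + (p - q - n + k) + -n) by
          linear_combination hp - hq]
        exact Int.mul_ediv_cancel_left _ h2ne
      rw [qbinom_neg₃ (le_of_lt hnk) hn,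
          qbinom_neg₃ (n := n-1) (k := k-1) (by omega) (by omega),
          qbinom_neg₃ (n := n-1) (k := k) (by omega) (by omega), eD, eE, eF,
          show n - 1 - (k - 1) = n - k by ring,
          show -(k-1) - 1 = -k by ring,
          show -(n-1) - 1 = -n by ring,
          show (-k).toNat = (-k-1).toNat + 1 by omega,
          show (-n).toNat = (-n-1).toNat + 1 by omega,
          show (n-k).toNat = (n-1-k).toNat + 1 by omega,
          gauss_succ, show ((-n-1).toNat : ℤ) + 1 = -n by omega]
      simp only [T_add]
      ring
  · -- n = 0
    subst hn
    rcases lt_trichotomy k 0 with hk | hk | hk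
    · -- n = 0 > k
      obtain ⟨q, hq⟩ := Int.even_mul_succ_self k
      have e1 : ((0-1) * ((0-1) + 1) - (k-1) * ((k-1) + 1)) / 2 = k - q := by
        rw [show ((0:ℤ)-1) * ((0-1) + 1) - (k-1) * ((k-1) + 1) = 2*(k - q) by
          linear_combination -hq]
        exact Int.mul_ediv_cancel_left _ h2ne
      have e2 : ((0-1) * ((0-1) + 1) - k * (k + 1)) / 2 = (0 - k) + (k - q) := by
        rw [show ((0:ℤ)-1) * ((0-1) + 1) - k * (k + 1) = 2*((0 - k) + (k - q)) by
          linear_combination -hq]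
        exact Int.mul_ediv_cancel_left _ h2ne
      rw [qbinom_zero (by omega),
          qbinom_neg₃ (n := 0-1) (k := k-1) (by omega) (by omega),
          qbinom_neg₃ (n := 0-1) (k := k) (by omega) (by omega), e1, e2,
          show -(k-1) - 1 = -k by ring,
          show -((0:ℤ)-1) - 1 = 0 by ring, Int.toNat_zero, gauss_zero, gauss_zero,
          show (0:ℤ)-1-(k-1) = -k by ring,
          show (-k).toNat = ((0:ℤ)-1-k).toNat + 1 by omega]
      simp only [T_add]
      ring
    · exact absurd ⟨rfl, hk⟩ h'
    · -- n = 0 < k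
      obtain ⟨m, hm⟩ := Int.even_mul_succ_self (k-1)
      have e1 : (k-1) * (2 * (0-1) - (k-1) + 1) / 2 = -m := by
        rw [show (k-1) * (2 * ((0:ℤ)-1) - (k-1) + 1) = 2*(-m) by linear_combination -hm]
        exact Int.mul_ediv_cancel_left _ h2ne
      have e2 : k * (2 * (0-1) - k + 1) / 2 = (0 - k) + -m := by
        rw [show k * (2 * ((0:ℤ)-1) - k + 1) = 2*((0 - k) + -m) by linear_combination -hm]
        exact Int.mul_ediv_cancel_left _ h2ne
      rw [qbinom_zero (by omega),
          qbinom_neg₂ (n := 0-1) (k := k-1) (by omega) (by omega),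
          qbinom_neg₂ (n := 0-1) (k := k) (by omega) (by omega), e1, e2,
          show k - 1 - ((0:ℤ)-1) - 1 = k - 1 by ring,
          show k - ((0:ℤ)-1) - 1 = k by ring,
          gauss_self, gauss_self,
          show k.toNat = (k-1).toNat + 1 by omega]
      simp only [T_add]
      ring
  · -- n > 0
    rcases lt_trichotomy k 0 with hk | hk | hk
    · rw [qbinom_zero (by omega), qbinom_zero (by omega), qbinom_zero (by omega)]; ring
    · -- k = 0 ≤ n
      subst hk
      rw [qbinom_pos le_rfl (by omega), qbinom_pos (n := n-1) (k := 0) le_rfl (by omega),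
        qbinom_zero (by omega)]
      simp [Int.toNat_zero, gauss_zero]
    · by_cases hk2 : k ≤ n
      · -- 0 < k ≤ n
        rw [qbinom_pos (by omega) hk2, qbinom_pos (n := n-1) (k := k-1) (by omega) (by omega)]
        have h2 : qbinom (n-1) k = gauss (n-1).toNat k.toNat := by
          rcases lt_or_eq_of_le hk2 with h3 | h3
          · exact qbinom_pos (by omega) (by omega)
          · rw [qbinom_zero (by omega), gauss_eq_zero _ _ (by omega)]
        rw [h2, show n.toNat = (n-1).toNat + 1 by omega, show k.toNat = (k-1).toNat + 1 by omega]
        have hp := gauss_pascal2 (n-1).toNat (k-1).toNat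
        rwa [show (((n-1).toNat : ℤ)) - (((k-1).toNat : ℤ)) = n - k by omega] at hp
      · rw [qbinom_zero (by omega), qbinom_zero (by omega), qbinom_zero (by omega)]; ring
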